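/- With the generalized Schreier families $\mathcal{F}_\alpha$ defined inductively ($\mathcal{F}_0$ = singletons plus $\emptyset$; $\mathcal{F}_\alpha = \bigcup_n \{F_1 \cup \cdots \cup F_n : F_i \in \mathcal{F}_{\alpha_i}, n \le F_1 < \cdots < F_n\}$), each $\mathcal{F}_\alpha$, identified with indicator functions in $\{0,1\}^{\mathbb{N}}$, is closed under pointwise limits: if $F_j \in \mathcal{F}_\alpha$ and $1_{F_j} \to 1_F$ pointwise, then $F \in \mathcal{F}_\alpha$. In particular $\mathcal{F}_\alpha$ is a compact metric space. -/

import Mathlib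

/-- Admissible unions of blocks: sets of the form `F₁ ∪ ⋯ ∪ F_n` with
`F_i ∈ F (g i)`, `n ≤ F₁ < F₂ < ⋯ < F_n` (conditions read on nonempty blocks,
equivalently every element is `≥ n` and blocks come in increasing order). -/
def schreierComb (F : Ordinal → Set (Finset ℕ)) (g : ℕ → Ordinal) :
    Set (Finset ℕ) :=
  {S | ∃ n : ℕ, 1 ≤ n ∧ ∃ f : Fin n → Finset ℕ,
    (∀ i : Fin n, f i ∈ F (g i.val)) ∧
    (∀ i : Fin n, ∀ m ∈ f i, n ≤ m) ∧
    (∀ i j : Fin n, i < j → ∀ a ∈ f i, ∀ b ∈ f j, a < b) ∧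
    S = Finset.univ.biUnion f}

/-- A system of generalized Schreier families `𝓕_α` for countable `α`:
`𝓕₀` is the singletons together with `∅`; for a successor `β+1` one uses the
constant sequence `α_i = β`; for a limit `α` a fixed strictly increasing
sequence `α_i ↑ α`. -/
def SchreierSystem (F : Ordinal → Set (Finset ℕ)) : Prop :=
  F 0 = insert ∅ {S : Finset ℕ | ∃ n : ℕ, S = {n}} ∧
  (∀ β : Ordinal, (β + 1).card ≤ Cardinal.aleph0 →
    F (β + 1) = schreierComb F (fun _ => β)) ∧
  (∀ α : Ordinal, α.card ≤ Cardinal.aleph0 → Order.IsSuccLimit α →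
    ∃ g : ℕ → Ordinal, StrictMono g ∧ (∀ i, g i < α) ∧ (⨆ i, g i) = α ∧
      F α = schreierComb F g)


/-- indicator embedding of a family of finite subsets of `ℕ` into `{0,1}^ℕ`. -/
def indFam (𝓐 : Set (Finset ℕ)) : Set (ℕ → Bool) :=
  {x | ∃ F ∈ 𝓐, ∀ m, x m = true ↔ m ∈ F}

namespace SchreierAux

def combK (F : Ordinal → Set (Finset ℕ)) (g : ℕ → Ordinal) (n : ℕ) :
    Set (Fin n → ℕ → Bool) :=
  {t | (∀ i, t i ∈ indFam (F (g i.val))) ∧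
       (∀ (i : Fin n) (m : ℕ), m < n → t i m = false) ∧
       (∀ i j : Fin n, i < j → ∀ a b : ℕ, t i a = true → t j b = true → a < b)}

def combU (n : ℕ) (t : Fin n → ℕ → Bool) : ℕ → Bool :=
  fun m => decide (∃ i, t i m = true)

lemma continuous_combU (n : ℕ) : Continuous (combU n) := by
  apply continuous_pi
  intro m
  have h1 : Continuous (fun t : Fin n → ℕ → Bool => fun i : Fin n => t i m) :=
    continuous_pi fun i => (continuous_apply m).comp (continuous_apply i)
  exact (continuous_of_discreteTopology
    (f := fun v : Fin n → Bool => decide (∃ i, v i = true))).comp h1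

lemma isClosed_combK (F : Ordinal → Set (Finset ℕ)) (g : ℕ → Ordinal)
    (hcl : ∀ i : ℕ, IsClosed (indFam (F (g i)))) (n : ℕ) :
    IsClosed (combK F g n) := by
  have hA : IsClosed {t : Fin n → ℕ → Bool | ∀ i, t i ∈ indFam (F (g i.val))} := by
    rw [Set.setOf_forall]
    exact isClosed_iInter fun i => (hcl i.val).preimage (continuous_apply i)
  have hB : IsClosed {t : Fin n → ℕ → Bool | ∀ (i : Fin n) (m : ℕ), m < n → t i m = false} := by
    rw [Set.setOf_forall]
    refine isClosed_iInter fun i => ?_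
    rw [Set.setOf_forall]
    refine isClosed_iInter fun m => ?_
    show IsClosed ((fun t : Fin n → ℕ → Bool => t i m) ⁻¹' {b : Bool | m < n → b = false})
    exact IsClosed.preimage ((continuous_apply m).comp (continuous_apply i))
      (isClosed_discrete _)
  have hC : IsClosed {t : Fin n → ℕ → Bool |
      ∀ i j : Fin n, i < j → ∀ a b : ℕ, t i a = true → t j b = true → a < b} := by
    rw [Set.setOf_forall]
    refine isClosed_iInter fun i => ?_
    rw [Set.setOf_forall]
    refine isClosed_iInter fun j => ?_
    rw [Set.setOf_forall]
    refine isClosed_iInter fun hij => ?_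
    rw [Set.setOf_forall]
    refine isClosed_iInter fun a => ?_
    rw [Set.setOf_forall]
    refine isClosed_iInter fun b => ?_
    show IsClosed ((fun t : Fin n → ℕ → Bool => (t i a, t j b)) ⁻¹'
      {p : Bool × Bool | p.1 = true → p.2 = true → a < b})
    exact IsClosed.preimage
      (((continuous_apply a).comp (continuous_apply i)).prodMk
        ((continuous_apply b).comp (continuous_apply j)))
      (isClosed_discrete _)
  exact hA.inter (hB.inter hC)

lemma indFam_comb_eq (F : Ordinal → Set (Finset ℕ)) (g : ℕ → Ordinal) :
    indFam (schreierComb F g) = ⋃ n, ⋃ (_ : 1 ≤ n), combU n '' combK F g n := by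
  ext x
  constructor
  · rintro ⟨S, ⟨n, hn, f, h1, h2, h3, hS⟩, hx⟩
    refine Set.mem_iUnion.2 ⟨n, Set.mem_iUnion.2 ⟨hn, ?_⟩⟩
    refine ⟨fun i m => decide (m ∈ f i), ⟨?_, ?_, ?_⟩, ?_⟩
    · intro i
      exact ⟨f i, h1 i, fun m => by simp⟩
    · intro i m hm
      simp only [decide_eq_false_iff_not]
      intro hmem
      exact absurd (h2 i m hmem) (by omega)
    · intro i j hij a b ha hb
      exact h3 i j hij a (by simpa using ha) b (by simpa using hb)
    · funext m
      rw [Bool.eq_iff_iff]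
      simp only [combU, decide_eq_true_eq]
      rw [hx m, hS]
      simp [Finset.mem_biUnion]
  · intro hx
    obtain ⟨n, h'⟩ := Set.mem_iUnion.1 hx
    obtain ⟨hn, t, ⟨ht1, ht2, ht3⟩, htx⟩ := Set.mem_iUnion.1 h'
    choose G hG1 hG2 using ht1
    refine ⟨Finset.univ.biUnion G, ⟨n, hn, G, hG1, ?_, ?_, rfl⟩, ?_⟩
    · intro i m hm
      by_contra h
      have := ht2 i m (by omega)
      rw [(hG2 i m).2 hm] at this
      simp at this
    · intro i j hij a ha b hb
      exact ht3 i j hij a b ((hG2 i a).2 ha) ((hG2 j b).2 hb)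
    · intro m
      rw [← htx]
      simp only [combU, decide_eq_true_eq, Finset.mem_biUnion]
      constructor
      · rintro ⟨i, hi⟩; exact ⟨i, Finset.mem_univ i, (hG2 i m).1 hi⟩
      · rintro ⟨i, _, hi⟩; exact ⟨i, (hG2 i m).2 hi⟩

lemma isClosed_indFam_comb (F : Ordinal → Set (Finset ℕ)) (g : ℕ → Ordinal)
    (hcl : ∀ i : ℕ, IsClosed (indFam (F (g i))))
    (hempty : ∅ ∈ F (g 0)) :
    IsClosed (indFam (schreierComb F g)) := by
  have hPhi : ∀ n : ℕ, IsClosed (combU n '' combK F g n) := fun n =>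
    (((isClosed_combK F g hcl n).isCompact).image (continuous_combU n)).isClosed
  rw [indFam_comb_eq]
  rw [← isOpen_compl_iff]
  rw [isOpen_iff_forall_mem_open]
  intro x hx
  -- x is not the zero function
  have hx0 : ∃ m, x m = true := by
    by_contra h
    push_neg at h
    apply hx
    refine Set.mem_iUnion.2 ⟨1, Set.mem_iUnion.2 ⟨le_refl 1, ?_⟩⟩
    refine ⟨fun _ _ => false, ⟨?_, ?_, ?_⟩, ?_⟩
    · intro i
      refine ⟨∅, ?_, by simp⟩
      have : i.val = 0 := by omega
      rw [this]; exact hempty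
    · intro i m _; rfl
    · intro i j hij; exact absurd hij (by omega)
    · funext m
      simp only [combU]
      rw [Bool.eq_iff_iff]
      simp only [decide_eq_true_eq]
      constructor
      · rintro ⟨i, hi⟩; exact absurd hi (by simp)
      · intro hxm; exact absurd hxm (h m)
  obtain ⟨m₀, hm₀⟩ := hx0
  set B : Set (ℕ → Bool) := ⋃ n ∈ Finset.Icc 1 m₀, combU n '' combK F g n with hB
  have hBclosed : IsClosed B := by
    apply Set.Finite.isClosed_biUnion (Finset.Icc 1 m₀).finite_toSet
    intro n _; exact hPhi n
  refine ⟨{y | y m₀ = true} ∩ Bᶜ, ?_, ?_, ?_⟩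
  · intro y ⟨hy1, hy2⟩
    intro hyA
    obtain ⟨n, h'⟩ := Set.mem_iUnion.1 hyA
    obtain ⟨hn, t, ht, hty⟩ := Set.mem_iUnion.1 h'
    by_cases hcase : n ≤ m₀
    · exact hy2 (Set.mem_biUnion (Finset.mem_coe.2 (Finset.mem_Icc.2 ⟨hn, hcase⟩)) ⟨t, ht, hty⟩)
    · have : combU n t m₀ = true := by rw [hty]; exact hy1
      simp only [combU, decide_eq_true_eq] at this
      obtain ⟨i, hi⟩ := this
      have := ht.2.1 i m₀ (by omega)
      rw [hi] at this
      simp at this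
  · refine IsOpen.inter ?_ hBclosed.isOpen_compl
    show IsOpen ((fun y : ℕ → Bool => y m₀) ⁻¹' {b : Bool | b = true})
    exact IsOpen.preimage (continuous_apply m₀) (isOpen_discrete _)
  · refine ⟨hm₀, fun h => hx ?_⟩
    obtain ⟨n, hn, hmem⟩ := Set.mem_iUnion₂.1 h
    exact Set.mem_iUnion.2
      ⟨n, Set.mem_iUnion.2 ⟨(Finset.mem_Icc.1 (Finset.mem_coe.1 hn)).1, hmem⟩⟩



lemma isClosed_indFam_zero (S0 : Set (Finset ℕ))
    (hS0 : S0 = insert ∅ {S : Finset ℕ | ∃ n : ℕ, S = {n}}) :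
    IsClosed (indFam S0) := by
  have heq : indFam S0 = {x : ℕ → Bool | ∀ a b : ℕ, x a = true → x b = true → a = b} := by
    ext x
    constructor
    · rintro ⟨T, hT, hx⟩
      rw [hS0] at hT
      rcases Set.mem_insert_iff.1 hT with h | ⟨n, h⟩
      · intro a b ha _
        rw [hx a, h] at ha
        simp at ha
      · intro a b ha hb
        rw [hx a, h, Finset.mem_singleton] at ha
        rw [hx b, h, Finset.mem_singleton] at hb
        omega
    · intro hx
      by_cases h : ∃ m, x m = true
      · obtain ⟨m, hm⟩ := h
        refine ⟨{m}, ?_, ?_⟩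
        · rw [hS0]; exact Set.mem_insert_iff.2 (Or.inr ⟨m, rfl⟩)
        · intro m'
          rw [Finset.mem_singleton]
          exact ⟨fun h' => hx m' m h' hm, fun h' => h' ▸ hm⟩
      · push_neg at h
        refine ⟨∅, ?_, ?_⟩
        · rw [hS0]; exact Set.mem_insert _ _
        · intro m'
          simp only [Finset.notMem_empty, iff_false]
          exact h m'
  rw [heq]
  rw [Set.setOf_forall]
  refine isClosed_iInter fun a => ?_
  rw [Set.setOf_forall]
  refine isClosed_iInter fun b => ?_
  show IsClosed ((fun x : ℕ → Bool => (x a, x b)) ⁻¹'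
    {p : Bool × Bool | p.1 = true → p.2 = true → a = b})
  exact IsClosed.preimage ((continuous_apply a).prodMk (continuous_apply b))
    (isClosed_discrete _)

lemma empty_mem_comb (F : Ordinal → Set (Finset ℕ)) (g : ℕ → Ordinal)
    (hempty : ∅ ∈ F (g 0)) : (∅ : Finset ℕ) ∈ schreierComb F g := by
  refine ⟨1, le_refl 1, fun _ => ∅, ?_, by simp, ?_, by simp⟩
  · intro i
    have : i.val = 0 := by omega
    rw [this]; exact hempty
  · intro i j hij
    exact absurd hij (by omega)

end SchreierAux


/-- each generalized Schreier family `𝓕_α`, identified with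
indicator functions in `{0,1}^ℕ`, is closed under pointwise limits, i.e.
closed (hence compact) in the product topology. -/
theorem stmt_12 (F : Ordinal → Set (Finset ℕ)) (hF : SchreierSystem F) :
    ∀ α : Ordinal, α.card ≤ Cardinal.aleph0 → IsClosed (indFam (F α)) := by
  obtain ⟨h0, hsucc, hlim⟩ := hF
  have hempty : ∀ α : Ordinal, α.card ≤ Cardinal.aleph0 → (∅ : Finset ℕ) ∈ F α := by
    intro α
    induction α using Ordinal.induction with
    | h α IH =>
      intro hcard
      rcases Ordinal.zero_or_succ_or_isSuccLimit α with h | ⟨β, hβ⟩ | h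
      · subst h
        rw [h0]
        exact Set.mem_insert _ _
      · have hβ' : α = β + 1 := by rw [← hβ, Ordinal.add_one_eq_succ]
        subst hβ'
        rw [hsucc β hcard]
        refine SchreierAux.empty_mem_comb F _ ?_
        exact IH β (by rw [Ordinal.add_one_eq_succ]; exact Order.lt_succ β)
          (le_trans (Ordinal.card_le_card (le_of_lt (by
            rw [Ordinal.add_one_eq_succ]; exact Order.lt_succ β))) hcard)
      · obtain ⟨g, _, hg2, _, hgF⟩ := hlim α hcard h
        rw [hgF]
        exact SchreierAux.empty_mem_comb F g
          (IH (g 0) (hg2 0) (le_trans (Ordinal.card_le_card (le_of_lt (hg2 0))) hcard))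
  intro α
  induction α using Ordinal.induction with
  | h α IH =>
    intro hcard
    rcases Ordinal.zero_or_succ_or_isSuccLimit α with h | ⟨β, hβ⟩ | h
    · subst h
      exact SchreierAux.isClosed_indFam_zero _ h0
    · have hβ' : α = β + 1 := by rw [← hβ, Ordinal.add_one_eq_succ]
      subst hβ'
      rw [hsucc β hcard]
      have hβlt : β < β + 1 := by rw [Ordinal.add_one_eq_succ]; exact Order.lt_succ β
      have hβc : β.card ≤ Cardinal.aleph0 :=
        le_trans (Ordinal.card_le_card (le_of_lt hβlt)) hcard
      exact SchreierAux.isClosed_indFam_comb F _ (fun _ => IH β hβlt hβc)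
        (hempty β hβc)
    · obtain ⟨g, _, hg2, _, hgF⟩ := hlim α hcard h
      rw [hgF]
      refine SchreierAux.isClosed_indFam_comb F g (fun i => ?_) ?_
      · exact IH (g i) (hg2 i) (le_trans (Ordinal.card_le_card (le_of_lt (hg2 i))) hcard)
      · exact hempty (g 0) (le_trans (Ordinal.card_le_card (le_of_lt (hg2 0))) hcard)
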